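/- arXiv:2604.04396 — 3 statements merged into one kernel-verified Lean document; each statement's English description precedes it below -/
import Mathlib

section
/- Let q be an indeterminate, p ∈ {0,1}, and z another indeterminate. For every a ≥ 0, the identity ∏_{j=0}^{a-1} (1 + ((-1)^p q^2)^j z) = ∑_{t=0}^{a} (-1)^{p·t(t-1)/2} q^{t(a-1)} [a; t]_{q,p} z^t holds in ℚ(q)[z]. -/
open scoped BigOperators
open Polynomial

/-- The indeterminate `q` in the field of rational functions `ℚ(q)`. -/
noncomputable def qq : RatFunc ℚ := RatFunc.X

/-- The super quantum binomial coefficient `[a; t]_{q,p}` for `a ∈ ℤ`, `t ∈ ℕ`. -/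
noncomputable def sqBinom (p : ℕ) (a : ℤ) (t : ℕ) : RatFunc ℚ :=
  (∏ s ∈ Finset.range t, (((-1) ^ p * qq) ^ (a - (s : ℤ)) - qq ^ ((s : ℤ) - a))) /
    (∏ s ∈ Finset.range t, (((-1) ^ p * qq) ^ ((s : ℤ) + 1) - qq ^ (-((s : ℤ) + 1))))

namespace SqAux

/-- classical Gaussian binomial with parameter `Q`. -/
noncomputable def gB (Q : RatFunc ℚ) (a t : ℕ) : RatFunc ℚ :=
  (∏ s ∈ Finset.range t, (Q ^ (a - s) - 1)) / (∏ s ∈ Finset.range t, (Q ^ (s + 1) - 1))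

lemma qq_ne_zero : qq ≠ 0 := RatFunc.X_ne_zero

lemma qq_pow_ne (m : ℕ) (hm : 1 ≤ m) (c : ℚ) (hc : c ≠ 0) :
    qq ^ m ≠ algebraMap (Polynomial ℚ) (RatFunc ℚ) (Polynomial.C c) := by
  intro h
  have h2 : (Polynomial.X : Polynomial ℚ) ^ m = Polynomial.C c := by
    apply RatFunc.algebraMap_injective ℚ
    rw [map_pow, RatFunc.algebraMap_X]
    exact h
  have h3 := congrArg (Polynomial.eval 0) h2
  simp [zero_pow (show m ≠ 0 by omega)] at h3
  exact hc h3.symm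

lemma sign_pow_ne_one (ε : RatFunc ℚ) (hε : ε = 1 ∨ ε = -1) (m : ℕ) (hm : 1 ≤ m) :
    ε * qq ^ m ≠ 1 := by
  rcases hε with rfl | rfl
  · intro h
    rw [one_mul] at h
    exact qq_pow_ne m hm 1 one_ne_zero (by simpa using h)
  · intro h
    have h' : qq ^ m = -1 := by linear_combination -h
    exact qq_pow_ne m hm (-1) (by norm_num) (by simpa using h')

lemma hQfact (p : ℕ) (hp : p = 0 ∨ p = 1) (k : ℕ) :
    ((-1 : RatFunc ℚ) ^ p * qq ^ 2) ^ (k + 1) - 1 ≠ 0 := by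
  intro h
  rw [sub_eq_zero, mul_pow, ← pow_mul, ← pow_mul] at h
  have hε : ((-1 : RatFunc ℚ) ^ (p * (k + 1)) = 1 ∨
      (-1 : RatFunc ℚ) ^ (p * (k + 1)) = -1) := by
    rcases Nat.even_or_odd (p * (k + 1)) with he | ho
    · exact Or.inl he.neg_one_pow
    · exact Or.inr ho.neg_one_pow
  exact sign_pow_ne_one _ hε (2 * (k + 1)) (by omega) h

lemma denom_ne (Q : RatFunc ℚ) (hQ : ∀ k : ℕ, Q ^ (k + 1) - 1 ≠ 0) (t : ℕ) :
    (∏ s ∈ Finset.range t, (Q ^ (s + 1) - 1)) ≠ 0 :=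
  Finset.prod_ne_zero_iff.mpr fun s _ => hQ s

lemma gB_top (Q : RatFunc ℚ) (a : ℕ) : gB Q a (a + 1) = 0 := by
  unfold gB
  rw [Finset.prod_eq_zero (Finset.self_mem_range_succ a) (by simp), zero_div]

lemma pascal (Q : RatFunc ℚ) (hQ : ∀ k : ℕ, Q ^ (k + 1) - 1 ≠ 0) (a t : ℕ) (ht : t ≤ a) :
    gB Q (a + 1) (t + 1) = gB Q a (t + 1) + Q ^ (a - t) * gB Q a t := by
  unfold gB
  have hN1 : (∏ s ∈ Finset.range (t + 1), (Q ^ (a + 1 - s) - 1))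
      = (Q ^ (a + 1) - 1) * ∏ s ∈ Finset.range t, (Q ^ (a - s) - 1) := by
    rw [Finset.prod_range_succ', mul_comm]
    congr 1
    exact Finset.prod_congr rfl fun s _ => by congr 2; omega
  have hN2 : (∏ s ∈ Finset.range (t + 1), (Q ^ (a - s) - 1))
      = (∏ s ∈ Finset.range t, (Q ^ (a - s) - 1)) * (Q ^ (a - t) - 1) :=
    Finset.prod_range_succ _ _
  have hD : (∏ s ∈ Finset.range (t + 1), (Q ^ (s + 1) - 1))
      = (∏ s ∈ Finset.range t, (Q ^ (s + 1) - 1)) * (Q ^ (t + 1) - 1) :=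
    Finset.prod_range_succ _ _
  rw [hN1, hN2, hD]
  have hd0 : (∏ s ∈ Finset.range t, (Q ^ (s + 1) - 1)) ≠ 0 := denom_ne Q hQ t
  have ht1 : Q ^ (t + 1) - 1 ≠ 0 := hQ t
  have hpow : Q ^ (a - t) * Q ^ (t + 1) = Q ^ (a + 1) := by
    rw [← pow_add]; congr 1; omega
  field_simp
  linear_combination (-(∏ x ∈ Finset.range t, (Q ^ (a - x) - 1))) * hpow

lemma two_exp (t : ℕ) : (t + 1) * t / 2 + t = (t + 1) * (t + 1 - 1) / 2 + t := by rfl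

lemma exp_aux (a t : ℕ) (ht : t ≤ a) :
    (t + 1) * t / 2 + (a - t) = a + t * (t - 1) / 2 := by
  have e : (t + 1) * t = t * (t - 1) + 2 * t := by
    cases t with
    | zero => rfl
    | succ t' => simp [Nat.succ_sub_one]; ring
  have hev' : Even (t * (t - 1)) := by
    rcases Nat.eq_zero_or_pos t with rfl | htpos
    · simp
    · have h := Nat.even_mul_succ_self (t - 1)
      have h2 : t - 1 + 1 = t := by omega
      rw [h2] at h
      rwa [mul_comm]
  obtain ⟨k, hk⟩ := hev'
  generalize hv : t * (t - 1) = v at e hk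
  generalize hu : (t + 1) * t = u at e
  omega

lemma pascalC (Q : RatFunc ℚ) (hQ : ∀ k : ℕ, Q ^ (k + 1) - 1 ≠ 0) (a t : ℕ) (ht : t ≤ a) :
    Q ^ ((t + 1) * t / 2) * gB Q (a + 1) (t + 1)
      = Q ^ ((t + 1) * t / 2) * gB Q a (t + 1)
        + Q ^ a * (Q ^ (t * (t - 1) / 2) * gB Q a t) := by
  rw [pascal Q hQ a t ht, mul_add]
  congr 1
  rw [← mul_assoc, ← mul_assoc, ← pow_add, ← pow_add, exp_aux a t ht]

lemma gauss (Q : RatFunc ℚ) (hQ : ∀ k : ℕ, Q ^ (k + 1) - 1 ≠ 0) (a : ℕ) :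
    ∏ j ∈ Finset.range a, (1 + C (Q ^ j) * X) =
      ∑ t ∈ Finset.range (a + 1), C (Q ^ (t * (t - 1) / 2) * gB Q a t) * X ^ t := by
  induction a with
  | zero => simp [gB]
  | succ a ih =>
    rw [Finset.prod_range_succ, ih]
    have hext : (∑ t ∈ Finset.range (a + 1), C (Q ^ (t * (t - 1) / 2) * gB Q a t) * X ^ t)
        = ∑ t ∈ Finset.range (a + 2), C (Q ^ (t * (t - 1) / 2) * gB Q a t) * X ^ t := by
      rw [Finset.sum_range_succ (n := a + 1), gB_top]
      simp
    rw [mul_add, mul_one, Finset.sum_mul, hext]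
    rw [Finset.sum_range_succ' (fun t => C (Q ^ (t * (t - 1) / 2) * gB Q a t) * X ^ t) (a + 1)]
    rw [Finset.sum_range_succ'
      (fun t => C (Q ^ (t * (t - 1) / 2) * gB Q (a + 1) t) * X ^ t) (a + 1)]
    have hsum : ∀ t ∈ Finset.range (a + 1),
        C (Q ^ ((t + 1) * (t + 1 - 1) / 2) * gB Q (a + 1) (t + 1)) * X ^ (t + 1)
          = C (Q ^ ((t + 1) * (t + 1 - 1) / 2) * gB Q a (t + 1)) * X ^ (t + 1)
            + (C (Q ^ (t * (t - 1) / 2) * gB Q a t) * X ^ t) * (C (Q ^ a) * X) := by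
      intro t htmem
      have ht : t ≤ a := by
        have := Finset.mem_range.mp htmem; omega
      have hps := pascalC Q hQ a t ht
      have h1 : (t + 1) * (t + 1 - 1) / 2 = (t + 1) * t / 2 := by simp
      rw [h1, hps, map_add, add_mul]
      congr 1
      simp only [map_mul]
      ring
    rw [Finset.sum_congr rfl hsum, Finset.sum_add_distrib]
    simp [gB]
    ring

lemma factor_eq (ε : RatFunc ℚ) (m : ℕ) :
    (ε * qq) ^ m - (qq ^ m)⁻¹ = (qq ^ m)⁻¹ * ((ε * qq ^ 2) ^ m - 1) := by
  have hqm : (qq : RatFunc ℚ) ^ m ≠ 0 := pow_ne_zero _ qq_ne_zero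
  field_simp
  ring

lemma sum_exp (a t : ℕ) (ht : t ≤ a) (htpos : 1 ≤ t) :
    t * (a - 1) + (∑ s ∈ Finset.range t, (s + 1))
      = (∑ s ∈ Finset.range t, (a - s)) + 2 * (t * (t - 1) / 2) := by
  have h1 : (∑ s ∈ Finset.range t, (a - s)) + (∑ s ∈ Finset.range t, s) = t * a := by
    rw [← Finset.sum_add_distrib]
    rw [Finset.sum_congr rfl (show ∀ s ∈ Finset.range t, a - s + s = a by
      intro s hs
      have h := Finset.mem_range.mp hs
      omega)]
    simp [mul_comm]
  have h2 : (∑ s ∈ Finset.range t, (s + 1)) = (∑ s ∈ Finset.range t, s) + t := by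
    rw [Finset.sum_add_distrib]; simp
  have h3 : (∑ s ∈ Finset.range t, s) * 2 = t * (t - 1) := Finset.sum_range_id_mul_two t
  have h4 : t * (a - 1) + t = t * a := by
    obtain ⟨b, rfl⟩ : ∃ b, a = b + 1 := ⟨a - 1, by omega⟩
    rw [Nat.add_sub_cancel, Nat.mul_succ]
  generalize hu : t * a = u at h1 h4
  generalize hv : t * (t - 1) = v at h3 ⊢
  generalize hw : t * (a - 1) = w at h4 ⊢
  omega

lemma sqBinom_eq (p : ℕ) (hp : p = 0 ∨ p = 1) (a t : ℕ) (ht : t ≤ a) :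
    (-1 : RatFunc ℚ) ^ (p * (t * (t - 1) / 2)) * qq ^ ((t : ℤ) * ((a : ℤ) - 1)) *
        sqBinom p (a : ℤ) t
      = ((-1 : RatFunc ℚ) ^ p * qq ^ 2) ^ (t * (t - 1) / 2)
        * gB ((-1) ^ p * qq ^ 2) a t := by
  rcases Nat.eq_zero_or_pos t with rfl | htpos
  · simp [sqBinom, gB]
  have ha : 1 ≤ a := le_trans htpos ht
  have hnum : ∀ s ∈ Finset.range t,
      ((-1 : RatFunc ℚ) ^ p * qq) ^ ((a : ℤ) - (s : ℤ)) - qq ^ ((s : ℤ) - (a : ℤ))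
        = (qq ^ (a - s))⁻¹ * ((((-1 : RatFunc ℚ) ^ p * qq ^ 2) ^ (a - s)) - 1) := by
    intro s hs
    have hs' : s ≤ a := le_trans (Nat.le_of_lt (Finset.mem_range.mp hs)) ht
    have h1 : (a : ℤ) - (s : ℤ) = ((a - s : ℕ) : ℤ) := by omega
    have h2 : (s : ℤ) - (a : ℤ) = -(((a - s : ℕ) : ℤ)) := by omega
    rw [h1, h2, zpow_natCast, zpow_neg, zpow_natCast]
    exact factor_eq _ _
  have hden : ∀ s ∈ Finset.range t,
      ((-1 : RatFunc ℚ) ^ p * qq) ^ ((s : ℤ) + 1) - qq ^ (-((s : ℤ) + 1))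
        = (qq ^ (s + 1))⁻¹ * ((((-1 : RatFunc ℚ) ^ p * qq ^ 2) ^ (s + 1)) - 1) := by
    intro s _
    have h1 : (s : ℤ) + 1 = ((s + 1 : ℕ) : ℤ) := by omega
    rw [h1, zpow_natCast, zpow_neg, zpow_natCast]
    exact factor_eq _ _
  rw [sqBinom, gB, Finset.prod_congr rfl hnum, Finset.prod_congr rfl hden,
    Finset.prod_mul_distrib, Finset.prod_mul_distrib,
    Finset.prod_inv_distrib, Finset.prod_inv_distrib,
    Finset.prod_pow_eq_pow_sum, Finset.prod_pow_eq_pow_sum]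
  set N := ∏ s ∈ Finset.range t, (((-1 : RatFunc ℚ) ^ p * qq ^ 2) ^ (a - s) - 1) with hN
  set D := ∏ s ∈ Finset.range t, (((-1 : RatFunc ℚ) ^ p * qq ^ 2) ^ (s + 1) - 1) with hD
  set E1 := ∑ s ∈ Finset.range t, (a - s) with hE1
  set E2 := ∑ s ∈ Finset.range t, (s + 1) with hE2
  have hzc : (t : ℤ) * ((a : ℤ) - 1) = ((t * (a - 1) : ℕ) : ℤ) := by
    rw [Nat.cast_mul, Nat.cast_sub ha]
    push_cast
    ring
  rw [hzc, zpow_natCast, pow_mul]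
  have hq1 : (qq : RatFunc ℚ) ^ E1 ≠ 0 := pow_ne_zero _ qq_ne_zero
  have hq2 : (qq : RatFunc ℚ) ^ E2 ≠ 0 := pow_ne_zero _ qq_ne_zero
  have key : ((qq ^ E1)⁻¹ * N) / ((qq ^ E2)⁻¹ * D)
      = qq ^ E2 * (qq ^ E1)⁻¹ * (N / D) := by
    rw [mul_div_mul_comm, inv_div_inv]
    ring
  have hq : qq ^ (t * (a - 1)) * qq ^ E2 = qq ^ E1 * (qq ^ 2) ^ (t * (t - 1) / 2) := by
    rw [← pow_mul, ← pow_add, ← pow_add]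
    exact congrArg (qq ^ ·) (sum_exp a t ht htpos)
  have h5 : qq ^ (t * (a - 1)) * (qq ^ E2 * (qq ^ E1)⁻¹) = (qq ^ 2) ^ (t * (t - 1) / 2) := by
    rw [← mul_assoc, hq, mul_comm, inv_mul_cancel_left₀ hq1]
  rw [key, mul_pow, ← h5]
  ring

end SqAux

/-- Gaussian binomial expansion of the finite product
`∏_{j=0}^{a-1} (1 + ((-1)^p q²)^j z)` in `ℚ(q)[z]`. -/
theorem prod_one_add_eq_sum_sqBinom (p : ℕ) (hp : p = 0 ∨ p = 1) (a : ℕ) :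
    ∏ j ∈ Finset.range a, (1 + C (((-1) ^ p * qq ^ 2) ^ j) * X) =
      ∑ t ∈ Finset.range (a + 1),
        C ((-1 : RatFunc ℚ) ^ (p * (t * (t - 1) / 2)) * qq ^ ((t : ℤ) * ((a : ℤ) - 1)) *
            sqBinom p (a : ℤ) t) * X ^ t := by
  rw [SqAux.gauss _ (SqAux.hQfact p hp) a]
  refine Finset.sum_congr rfl fun t htmem => ?_
  have ht : t ≤ a := by
    have := Finset.mem_range.mp htmem; omega
  rw [SqAux.sqBinom_eq p hp a t ht]
end

section
/- For p ∈ {0,1} and every integer n ≥ 1, the alternating sum ∑_{t=0}^{n} (-1)^{t + p·binom(t,2)} q^{t(n-1)} [n; t]_{q,p} equals 0 in ℚ(q). -/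
open scoped BigOperators

/-- The super quantum integer `[m]_{Q,p}`. -/
noncomputable def sqInt (p : ℕ) (Q : RatFunc ℚ) (m : ℕ) : RatFunc ℚ :=
  (((-1) ^ p * Q) ^ m - Q⁻¹ ^ m) / ((-1) ^ p * Q - Q⁻¹)

/-- The super quantum factorial `[n]!_{Q,p}`. -/
noncomputable def sqFact (p : ℕ) (Q : RatFunc ℚ) (n : ℕ) : RatFunc ℚ :=
  ∏ s ∈ Finset.range n, sqInt p Q (s + 1)

/-- The super quantum binomial coefficient `[n; t]_{Q,p} = [n]!/([t]![n-t]!)`. -/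
noncomputable def sqBinomN (p : ℕ) (Q : RatFunc ℚ) (n t : ℕ) : RatFunc ℚ :=
  sqFact p Q n / (sqFact p Q t * sqFact p Q (n - t))

/- ## Auxiliary development -/

lemma qq_ne_zero : qq ≠ 0 := RatFunc.X_ne_zero

lemma choose_two_succ (n : ℕ) : (n + 1).choose 2 = n.choose 2 + n := by
  rw [Nat.choose_succ_succ, Nat.choose_one_right, Nat.add_comm]

lemma choose_two_add (a b : ℕ) :
    (a + b).choose 2 = a.choose 2 + b.choose 2 + a * b := by
  induction b with
  | zero => simp
  | succ b ih =>
    have h1 : a + (b + 1) = (a + b) + 1 := by omega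
    rw [h1, choose_two_succ, ih, choose_two_succ, Nat.mul_succ]
    omega

lemma two_mul_choose_two (t : ℕ) : 2 * t.choose 2 = t * (t - 1) := by
  cases t with
  | zero => simp
  | succ s =>
    rw [Nat.choose_two_right, Nat.succ_sub_one]
    have hdvd : 2 ∣ (s + 1) * s := by
      rcases Nat.even_or_odd s with he | ho
      · exact Dvd.dvd.mul_left he.two_dvd (s + 1)
      · exact Dvd.dvd.mul_right (ho.add_one).two_dvd s
    rw [Nat.mul_div_cancel' hdvd]

/-- `qq ^ k` is never a constant, for `k ≥ 1`. -/
lemma qq_pow_ne_const (k : ℕ) (hk : 1 ≤ k) (c : ℚ) :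
    qq ^ k ≠ algebraMap ℚ (RatFunc ℚ) c := by
  intro h
  have h1 : algebraMap (Polynomial ℚ) (RatFunc ℚ) (Polynomial.X ^ k) =
      algebraMap (Polynomial ℚ) (RatFunc ℚ) (Polynomial.C c) := by
    rw [map_pow, RatFunc.algebraMap_X, RatFunc.algebraMap_C]
    rw [qq] at h
    rw [h]
    exact RingHom.congr_fun (Subsingleton.elim _ _) c
  have h2 := RatFunc.algebraMap_injective ℚ h1
  have h3 := congrArg Polynomial.natDegree h2
  rw [Polynomial.natDegree_X_pow, Polynomial.natDegree_C] at h3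
  omega

section GaussianBinomial

variable (Q : RatFunc ℚ)

/-- Product `∏_{s=1}^n (Q^s - 1)`. -/
noncomputable def gfact (n : ℕ) : RatFunc ℚ :=
  ∏ s ∈ Finset.range n, (Q ^ (s + 1) - 1)

/-- Gaussian binomial coefficient (as a rational function), `0` for `t > n`. -/
noncomputable def gb (n t : ℕ) : RatFunc ℚ :=
  if t ≤ n then gfact Q n / (gfact Q t * gfact Q (n - t)) else 0

variable (hQ : ∀ m : ℕ, 1 ≤ m → Q ^ m ≠ 1)

include hQ

lemma gfact_ne_zero (n : ℕ) : gfact Q n ≠ 0 := by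
  rw [gfact]
  apply Finset.prod_ne_zero_iff.mpr
  intro s _
  exact sub_ne_zero.mpr (hQ (s + 1) (by omega))

omit hQ

lemma gfact_succ (n : ℕ) : gfact Q (n + 1) = (Q ^ (n + 1) - 1) * gfact Q n := by
  rw [gfact, Finset.prod_range_succ, mul_comm]
  rfl

lemma gfact_zero : gfact Q 0 = 1 := by simp [gfact]

include hQ

lemma gb_zero (n : ℕ) : gb Q n 0 = 1 := by
  rw [gb, if_pos (Nat.zero_le n), gfact_zero, Nat.sub_zero, one_mul,
    div_self (gfact_ne_zero Q hQ n)]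

lemma gb_self (n : ℕ) : gb Q n n = 1 := by
  rw [gb, if_pos le_rfl, Nat.sub_self, gfact_zero, mul_one,
    div_self (gfact_ne_zero Q hQ n)]

omit hQ

lemma gb_of_gt {n t : ℕ} (h : n < t) : gb Q n t = 0 := by
  rw [gb, if_neg (by omega)]

include hQ

/-- The `q`-Pascal identity. -/
lemma gb_pascal (n t : ℕ) (h : t ≤ n) :
    gb Q (n + 1) (t + 1) = Q ^ (t + 1) * gb Q n (t + 1) + gb Q n t := by
  rcases eq_or_lt_of_le h with rfl | hlt
  · rw [gb_self Q hQ, gb_self Q hQ, gb_of_gt Q (Nat.lt_succ_self t), mul_zero, zero_add]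
  · -- here t + 1 ≤ n
    have ht1 : t + 1 ≤ n := hlt
    rw [gb, if_pos (by omega), gb, if_pos ht1, gb, if_pos h]
    have e1 : n + 1 - (t + 1) = n - t := by omega
    have e2 : n - t = (n - (t + 1)) + 1 := by omega
    rw [e1, e2, gfact_succ Q (n - (t + 1)), gfact_succ Q n, gfact_succ Q t]
    have hpow : Q ^ (n + 1) = Q ^ (t + 1) * Q ^ (n - (t + 1) + 1) := by
      rw [← pow_add]
      congr 1
      omega
    rw [hpow]
    have h1 := gfact_ne_zero Q hQ n
    have h2 := gfact_ne_zero Q hQ t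
    have h4 := gfact_ne_zero Q hQ (n - (t + 1))
    have h5 : Q ^ (t + 1) - 1 ≠ 0 := sub_ne_zero.mpr (hQ (t + 1) (by omega))
    have h6 : Q ^ (n - (t + 1) + 1) - 1 ≠ 0 :=
      sub_ne_zero.mpr (hQ (n - (t + 1) + 1) (by omega))
    field_simp
    ring

omit hQ

/-- Telescoping term for the alternating-sum identity. -/
noncomputable def gterm (m j : ℕ) : RatFunc ℚ :=
  (-1 : RatFunc ℚ) ^ j * Q ^ j.choose 2 * Q ^ j * gb Q m j

include hQ

/-- The key alternating-sum identity for Gaussian binomials. -/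
lemma gb_alt_sum (n : ℕ) (hn : 1 ≤ n) :
    ∑ t ∈ Finset.range (n + 1),
      (-1 : RatFunc ℚ) ^ t * Q ^ t.choose 2 * gb Q n t = 0 := by
  obtain ⟨m, rfl⟩ : ∃ m, n = m + 1 := ⟨n - 1, by omega⟩
  rw [Finset.sum_range_succ']
  have hstep : ∀ i ∈ Finset.range (m + 1),
      (-1 : RatFunc ℚ) ^ (i + 1) * Q ^ (i + 1).choose 2 * gb Q (m + 1) (i + 1) =
      gterm Q m (i + 1) - gterm Q m i := by
    intro i hi
    have hi' : i ≤ m := Nat.lt_succ_iff.mp (Finset.mem_range.mp hi)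
    rw [gterm, gterm, gb_pascal Q hQ m i hi', choose_two_succ, pow_add, pow_add, pow_succ]
    ring
  rw [Finset.sum_congr rfl hstep, Finset.sum_range_sub (gterm Q m)]
  have hz : gterm Q m (m + 1) = 0 := by
    rw [gterm, gb_of_gt Q (Nat.lt_succ_self m), mul_zero]
  have h0 : gterm Q m 0 = 1 := by
    rw [gterm, gb_zero Q hQ]
    norm_num
  rw [hz, h0, gb_zero Q hQ]
  norm_num

end GaussianBinomial

section SqReduction

variable (p : ℕ)

lemma q_sq_sub_one_ne_zero (hQ : ∀ m : ℕ, 1 ≤ m → ((-1 : RatFunc ℚ) ^ p * qq ^ 2) ^ m ≠ 1) :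
    (-1 : RatFunc ℚ) ^ p * qq ^ 2 - 1 ≠ 0 := by
  have := hQ 1 le_rfl
  rw [pow_one] at this
  exact sub_ne_zero.mpr this

lemma sq_den_ne_zero (hQ1 : (-1 : RatFunc ℚ) ^ p * qq ^ 2 - 1 ≠ 0) :
    (-1 : RatFunc ℚ) ^ p * qq - qq⁻¹ ≠ 0 := by
  intro h0
  apply hQ1
  have h : qq * ((-1 : RatFunc ℚ) ^ p * qq - qq⁻¹) = (-1 : RatFunc ℚ) ^ p * qq ^ 2 - 1 := by
    have hx := qq_ne_zero
    field_simp
  rw [← h, h0, mul_zero]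

lemma sqInt_succ (m : ℕ) (hQ1 : (-1 : RatFunc ℚ) ^ p * qq ^ 2 - 1 ≠ 0) :
    sqInt p qq (m + 1) =
      (qq⁻¹) ^ m * ((((-1 : RatFunc ℚ) ^ p * qq ^ 2) ^ (m + 1) - 1) /
        ((-1 : RatFunc ℚ) ^ p * qq ^ 2 - 1)) := by
  have hx := qq_ne_zero
  have hden := sq_den_ne_zero p hQ1
  rw [sqInt, ← mul_div_assoc, div_eq_div_iff hden hQ1]
  field_simp
  have h1 : qq * qq⁻¹ = 1 := mul_inv_cancel₀ hx
  have hc : qq ^ m * qq⁻¹ ^ m = 1 := by rw [← mul_pow, h1, one_pow]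
  linear_combination (-qq⁻¹ ^ m) * h1 - qq ^ 2 * qq ^ m * (-1 : RatFunc ℚ) ^ p * (-1 : RatFunc ℚ) ^ (p * m) * hc

lemma sqFact_eq (n : ℕ) (hQ1 : (-1 : RatFunc ℚ) ^ p * qq ^ 2 - 1 ≠ 0) :
    sqFact p qq n = (qq⁻¹) ^ n.choose 2 * gfact ((-1 : RatFunc ℚ) ^ p * qq ^ 2) n /
      ((-1 : RatFunc ℚ) ^ p * qq ^ 2 - 1) ^ n := by
  induction n with
  | zero => simp [sqFact, gfact_zero]
  | succ n ih =>
    have hx := qq_ne_zero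
    rw [sqFact, Finset.prod_range_succ, ← sqFact, ih, sqInt_succ p n hQ1,
      gfact_succ, choose_two_succ, pow_add, pow_succ]
    field_simp
    ring

lemma sqBinom_eq (n t : ℕ) (ht : t ≤ n)
    (hQ : ∀ m : ℕ, 1 ≤ m → ((-1 : RatFunc ℚ) ^ p * qq ^ 2) ^ m ≠ 1) :
    sqBinomN p qq n t =
      (qq⁻¹) ^ (t * (n - t)) * gb ((-1 : RatFunc ℚ) ^ p * qq ^ 2) n t := by
  have hQ1 := q_sq_sub_one_ne_zero p hQ
  set Q : RatFunc ℚ := (-1 : RatFunc ℚ) ^ p * qq ^ 2 with hQdef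
  have hx := qq_ne_zero
  rw [sqBinomN, sqFact_eq p n hQ1, sqFact_eq p t hQ1, sqFact_eq p (n - t) hQ1,
    gb, if_pos ht]
  have h2 : n.choose 2 = t.choose 2 + (n - t).choose 2 + t * (n - t) := by
    conv_lhs => rw [show n = t + (n - t) by omega]
    rw [choose_two_add]
  have h3 : (Q - 1) ^ n = (Q - 1) ^ t * (Q - 1) ^ (n - t) := by
    rw [← pow_add]
    congr 1
    omega
  rw [h2, pow_add, pow_add, h3]
  have g1 := gfact_ne_zero Q hQ n
  have g2 := gfact_ne_zero Q hQ t
  have g3 := gfact_ne_zero Q hQ (n - t)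
  have hxi : (qq⁻¹ : RatFunc ℚ) ≠ 0 := inv_ne_zero hx
  have e1 : (qq⁻¹ : RatFunc ℚ) ^ t.choose 2 ≠ 0 := pow_ne_zero _ hxi
  have e2 : (qq⁻¹ : RatFunc ℚ) ^ (n - t).choose 2 ≠ 0 := pow_ne_zero _ hxi
  have e3 : (qq⁻¹ : RatFunc ℚ) ^ (t * (n - t)) ≠ 0 := pow_ne_zero _ hxi
  have d1 : (Q - 1) ^ t ≠ 0 := pow_ne_zero _ hQ1
  have d2 : (Q - 1) ^ (n - t) ≠ 0 := pow_ne_zero _ hQ1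
  set x1 := (qq⁻¹ : RatFunc ℚ) ^ t.choose 2 with hx1
  set x2 := (qq⁻¹ : RatFunc ℚ) ^ (n - t).choose 2 with hx2
  set x3 := (qq⁻¹ : RatFunc ℚ) ^ (t * (n - t)) with hx3
  set y1 := (Q - 1) ^ t with hy1
  set y2 := (Q - 1) ^ (n - t) with hy2
  set z1 := gfact Q n with hz1
  set z2 := gfact Q t with hz2
  set z3 := gfact Q (n - t) with hz3
  field_simp

end SqReduction

/-- The alternating sum `∑_{t=0}^n (-1)^{t + p·C(t,2)} q^{t(n-1)} [n; t]_{q,p} = 0`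
for `n ≥ 1`. -/
theorem alternating_sum_sqBinom_eq_zero (p : ℕ) (hp : p = 0 ∨ p = 1)
    (n : ℕ) (hn : 1 ≤ n) :
    ∑ t ∈ Finset.range (n + 1),
        (-1 : RatFunc ℚ) ^ (t + p * Nat.choose t 2) * qq ^ (t * (n - 1)) *
          sqBinomN p qq n t = 0 := by
  have hx := qq_ne_zero
  have hQ : ∀ m : ℕ, 1 ≤ m → ((-1 : RatFunc ℚ) ^ p * qq ^ 2) ^ m ≠ 1 := by
    intro m hm h
    have hq2 : ((-1 : RatFunc ℚ) ^ p * qq ^ 2) ^ m =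
        ((-1 : RatFunc ℚ) ^ p) ^ m * qq ^ (2 * m) := by
      rw [mul_pow, pow_mul]
    have hε : ((-1 : RatFunc ℚ) ^ p) ^ m = 1 ∨ ((-1 : RatFunc ℚ) ^ p) ^ m = -1 := by
      rcases hp with rfl | rfl
      · left; simp
      · rcases Nat.even_or_odd m with he | ho
        · left; simp [he.neg_one_pow]
        · right; simp [ho.neg_one_pow]
    rcases hε with h1 | h1
    · apply qq_pow_ne_const (2 * m) (by omega) 1
      rw [map_one]
      rw [hq2, h1, one_mul] at h
      exact h
    · apply qq_pow_ne_const (2 * m) (by omega) (-1)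
      rw [map_neg, map_one]
      rw [hq2, h1] at h
      linear_combination -h
  have key : ∀ t ∈ Finset.range (n + 1),
      (-1 : RatFunc ℚ) ^ (t + p * Nat.choose t 2) * qq ^ (t * (n - 1)) *
        sqBinomN p qq n t =
      (-1 : RatFunc ℚ) ^ t * ((-1 : RatFunc ℚ) ^ p * qq ^ 2) ^ t.choose 2 *
        gb ((-1 : RatFunc ℚ) ^ p * qq ^ 2) n t := by
    intro t ht
    have ht' : t ≤ n := Nat.lt_succ_iff.mp (Finset.mem_range.mp ht)
    rw [sqBinom_eq p n t ht' hQ]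
    have hexp : t * (n - 1) = 2 * t.choose 2 + t * (n - t) := by
      rw [two_mul_choose_two]
      rcases Nat.eq_zero_or_pos t with rfl | htpos
      · simp
      · have h5 : n - 1 = (t - 1) + (n - t) := by omega
        rw [h5, Nat.mul_add]
    have hc : qq ^ (t * (n - t)) * (qq⁻¹) ^ (t * (n - t)) = 1 := by
      rw [inv_pow, mul_inv_cancel₀ (pow_ne_zero _ hx)]
    have hscal : (-1 : RatFunc ℚ) ^ (t + p * Nat.choose t 2) * qq ^ (t * (n - 1)) *
        (qq⁻¹) ^ (t * (n - t)) =
        (-1 : RatFunc ℚ) ^ t * ((-1 : RatFunc ℚ) ^ p * qq ^ 2) ^ t.choose 2 := by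
      rw [hexp, pow_add, pow_mul, pow_add qq, pow_mul qq, mul_pow]
      linear_combination ((-1 : RatFunc ℚ) ^ t * ((-1 : RatFunc ℚ) ^ p) ^ t.choose 2 *
        (qq ^ 2) ^ t.choose 2) * hc
    linear_combination gb ((-1 : RatFunc ℚ) ^ p * qq ^ 2) n t * hscal
  rw [Finset.sum_congr rfl key]
  exact gb_alt_sum ((-1 : RatFunc ℚ) ^ p * qq ^ 2) hQ n hn
end

section
/- The super quantum binomial coefficient [a; t]_{q,p} lies in ℤ[q, q^{-1}] for every a ∈ ℤ and t ∈ ℕ. -/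
open scoped BigOperators

lemma qq_zpow_ne_one {n : ℤ} (hn : 0 < n) : qq ^ n ≠ 1 := by
  intro h
  rw [show n = (n.toNat : ℤ) by omega, zpow_natCast] at h
  have h2 : (Polynomial.X : Polynomial ℚ) ^ n.toNat = 1 := by
    apply RatFunc.algebraMap_injective ℚ
    rw [map_pow, map_one, RatFunc.algebraMap_X]
    exact h
  have := congrArg Polynomial.natDegree h2
  rw [Polynomial.natDegree_X_pow, Polynomial.natDegree_one] at this
  omega

lemma eps_ne_zero (p : ℕ) : ((-1 : RatFunc ℚ) ^ p) ≠ 0 := pow_ne_zero _ (by norm_num)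

lemma dterm_ne_zero (p : ℕ) {m : ℤ} (hm : 0 < m) :
    ((-1 : RatFunc ℚ) ^ p * qq) ^ m - qq ^ (-m) ≠ 0 := by
  intro h
  rw [sub_eq_zero, mul_zpow] at h
  have hq := qq_ne_zero
  have heps2 : ((-1 : RatFunc ℚ) ^ p) * ((-1 : RatFunc ℚ) ^ p) = 1 := by
    rw [← pow_add]
    exact Even.neg_one_pow ⟨p, rfl⟩
  have h2 : qq ^ (m + m) = qq ^ (-m + -m) := by
    have := congrArg (fun y => y * y) h
    rw [← zpow_add₀ hq] at this
    calc qq ^ (m + m) = (((-1:RatFunc ℚ)^p)^m * ((-1:RatFunc ℚ)^p)^m) * qq ^ (m+m) := by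
          rw [← mul_zpow, heps2, one_zpow, one_mul]
      _ = qq ^ (-m + -m) := by rw [zpow_add₀ hq m m, ← this]; ring
  have h4 : qq ^ ((m + m) - (-m + -m)) = 1 := by
    rw [zpow_sub₀ hq, h2, div_self (zpow_ne_zero _ hq)]
  exact qq_zpow_ne_one (by omega) h4

lemma div_helperX {F : Type*} [Field F] (P nt d D c q' : F) (hD : D ≠ 0) (hd : d ≠ 0) :
    P * (c * nt + q' * d) / (D * d) = c * (P * nt / (D * d)) + q' * (P / D) := by
  field_simp

lemma dprod_ne_zero (p : ℕ) (t : ℕ) :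
    (∏ s ∈ Finset.range t, (((-1 : RatFunc ℚ) ^ p * qq) ^ ((s : ℤ) + 1) - qq ^ (-((s : ℤ) + 1)))) ≠ 0 := by
  rw [Finset.prod_ne_zero_iff]
  intro s _
  exact dterm_ne_zero p (by positivity)

lemma sqBinom_rec (p : ℕ) (a : ℤ) (k : ℕ) :
    sqBinom p a (k + 1) =
      ((-1 : RatFunc ℚ) ^ p * qq) ^ ((k : ℤ) + 1) * sqBinom p (a - 1) (k + 1)
        + qq ^ (((k : ℤ) + 1) - a) * sqBinom p (a - 1) k := by
  have hq := qq_ne_zero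
  have hQ : ((-1 : RatFunc ℚ) ^ p * qq) ≠ 0 := mul_ne_zero (eps_ne_zero p) hq
  set Q : RatFunc ℚ := (-1 : RatFunc ℚ) ^ p * qq with hQdef
  unfold sqBinom
  rw [Finset.prod_range_succ' (fun s => Q ^ (a - (s : ℤ)) - qq ^ ((s : ℤ) - a))]
  rw [Finset.prod_range_succ (fun s => Q ^ ((s : ℤ) + 1) - qq ^ (-((s : ℤ) + 1)))]
  rw [Finset.prod_range_succ (fun s => Q ^ (a - 1 - (s : ℤ)) - qq ^ ((s : ℤ) - (a - 1)))]
  have e1 : (∏ s ∈ Finset.range k, (Q ^ (a - ((s : ℕ) + 1 : ℕ)) - qq ^ (((s : ℕ) + 1 : ℕ) - a)))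
      = ∏ s ∈ Finset.range k, (Q ^ (a - 1 - (s : ℤ)) - qq ^ ((s : ℤ) - (a - 1))) := by
    apply Finset.prod_congr rfl
    intro s _
    congr 1
    · congr 1; push_cast; ring
    · congr 1; push_cast; ring
  rw [e1]
  set P : RatFunc ℚ := ∏ s ∈ Finset.range k, (Q ^ (a - 1 - (s : ℤ)) - qq ^ ((s : ℤ) - (a - 1)))
  set D : RatFunc ℚ := ∏ s ∈ Finset.range k, (Q ^ ((s : ℤ) + 1) - qq ^ (-((s : ℤ) + 1)))
  have hD : D ≠ 0 := dprod_ne_zero p k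
  have hd : Q ^ ((k : ℤ) + 1) - qq ^ (-((k : ℤ) + 1)) ≠ 0 := dterm_ne_zero p (by positivity)
  have key : Q ^ (a - (0 : ℤ)) - qq ^ ((0 : ℤ) - a)
      = Q ^ ((k : ℤ) + 1) * (Q ^ (a - 1 - (k : ℤ)) - qq ^ ((k : ℤ) - (a - 1))) + qq ^ (((k : ℤ) + 1) - a) * (Q ^ ((k : ℤ) + 1) - qq ^ (-((k : ℤ) + 1))) := by
    rw [mul_sub, mul_sub, ← zpow_add₀ hQ, ← zpow_add₀ hq]
    rw [show ((k : ℤ) + 1) + (a - 1 - (k : ℤ)) = a - 0 by omega,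
        show ((((k : ℤ) + 1) - a)) + (-((k : ℤ) + 1)) = 0 - a by omega,
        show ((k : ℤ)) - (a - 1) = ((k : ℤ) + 1) - a by omega]
    ring
  simp only [Nat.cast_zero]
  rw [key]
  exact div_helperX P _ _ D _ _ hD hd

lemma qq_zpow_mem (m : ℤ) : qq ^ m ∈ Subring.closure ({qq, qq⁻¹} : Set (RatFunc ℚ)) := by
  have hq : qq ∈ Subring.closure ({qq, qq⁻¹} : Set (RatFunc ℚ)) :=
    Subring.subset_closure (by simp)
  have hqi : qq⁻¹ ∈ Subring.closure ({qq, qq⁻¹} : Set (RatFunc ℚ)) :=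
    Subring.subset_closure (by simp)
  cases m with
  | ofNat n => simpa using pow_mem hq n
  | negSucc n => rw [zpow_negSucc, ← inv_pow]; exact pow_mem hqi _

lemma neg_one_zpow_mem (x : RatFunc ℚ) (hx : x = 1 ∨ x = -1) (m : ℤ) :
    x ^ m ∈ Subring.closure ({qq, qq⁻¹} : Set (RatFunc ℚ)) := by
  rcases hx with h | h
  · rw [h, one_zpow]; exact one_mem _
  · rcases Int.even_or_odd m with h2 | h2
    · rw [h, h2.neg_one_zpow]; exact one_mem _
    · rw [h, h2.neg_one_zpow]; exact neg_mem (one_mem _)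

lemma Qpow_mem (p : ℕ) (m : ℤ) :
    ((-1 : RatFunc ℚ) ^ p * qq) ^ m ∈ Subring.closure ({qq, qq⁻¹} : Set (RatFunc ℚ)) := by
  rw [mul_zpow]
  refine mul_mem (neg_one_zpow_mem _ ?_ m) (qq_zpow_mem m)
  rcases Nat.even_or_odd p with h | h
  · exact Or.inl h.neg_one_pow
  · exact Or.inr h.neg_one_pow

/-- `[a; t]_{q,p}` lies in the ring of Laurent polynomials with integer
coefficients `ℤ[q, q⁻¹]`, i.e. in the subring of `ℚ(q)` generated by `q` and `q⁻¹`. -/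
theorem sqBinom_mem_laurent (p : ℕ) (hp : p = 0 ∨ p = 1) (a : ℤ) (t : ℕ) :
    sqBinom p a t ∈ Subring.closure ({qq, qq⁻¹} : Set (RatFunc ℚ)) := by
  clear hp
  induction t generalizing a with
  | zero => simpa [sqBinom] using one_mem _
  | succ k ih =>
    induction a using Int.induction_on with
    | zero =>
      have h0 : sqBinom p 0 (k + 1) = 0 := by
        unfold sqBinom
        rw [div_eq_zero_iff]
        left
        apply Finset.prod_eq_zero (Finset.mem_range.mpr (Nat.succ_pos k))
        simp
      rw [h0]
      exact zero_mem _
    | succ n ihn =>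
      rw [sqBinom_rec p ((n : ℤ) + 1) k]
      simp only [add_sub_cancel_right]
      exact add_mem (mul_mem (Qpow_mem p _) ihn)
        (mul_mem (qq_zpow_mem _) (ih n))
    | pred n ihn =>
      have hQt : (((-1 : RatFunc ℚ) ^ p * qq) ^ ((k : ℤ) + 1)) ≠ 0 :=
        zpow_ne_zero _ (mul_ne_zero (eps_ne_zero p) qq_ne_zero)
      have hrec := sqBinom_rec p (-(n : ℤ)) k
      have hsolve : sqBinom p (-(n : ℤ) - 1) (k + 1) =
          (((-1 : RatFunc ℚ) ^ p * qq) ^ ((k : ℤ) + 1))⁻¹ *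
            (sqBinom p (-(n : ℤ)) (k + 1)
              - qq ^ (((k : ℤ) + 1) - (-(n : ℤ))) * sqBinom p (-(n : ℤ) - 1) k) := by
        rw [hrec]
        field_simp
        ring
      rw [hsolve, ← zpow_neg]
      exact mul_mem (Qpow_mem p _)
        (sub_mem ihn (mul_mem (qq_zpow_mem _) (ih _)))
end
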